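/- Let p be a prime, q = p^s, n a positive integer, and r a positive integer with r | q^n − 1. Then for any θ ∈ F_{q^n}^* and t ∈ F_q, the rational function θx^r + t x^{−r} over F_{q^n} cannot be written as h(x)^p − h(x) + c for any rational function h ∈ F_{q^n}(x) and constant c ∈ F_{q^n}. -/
import Mathlib


open RatFunc in
lemma aux_intDegree_pow {K : Type*} [Field K] (x : RatFunc K) (hx : x ≠ 0) (k : ℕ) :
    (x ^ k).intDegree = k * x.intDegree := by
  induction k with
  | zero => simp [intDegree_one]
  | succ m ih =>
      rw [pow_succ, intDegree_mul (pow_ne_zero m hx) hx, ih]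
      push_cast; ring

open RatFunc in
lemma aux_intDegree_nonpos {K : Type*} [Field K] {x y : RatFunc K}
    (hx : x.intDegree ≤ 0) (hy : y.intDegree ≤ 0) : (x + y).intDegree ≤ 0 := by
  by_cases hxy : x + y = 0
  · simp [hxy, intDegree_zero]
  by_cases hy0 : y = 0
  · simpa [hy0] using hx
  exact le_trans (intDegree_add_le hy0 hxy) (max_le hx hy)

open RatFunc in
lemma aux_intDegree_dom {K : Type*} [Field K] {x y : RatFunc K} (hx : x ≠ 0)
    (hy : y = 0 ∨ y.intDegree < x.intDegree) :
    x + y ≠ 0 ∧ (x + y).intDegree = x.intDegree := by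
  by_cases hy0 : y = 0
  · simp [hy0, hx]
  have hlt : y.intDegree < x.intDegree := hy.resolve_left hy0
  have hne : x + y ≠ 0 := by
    intro hzero
    have : y = -x := by linear_combination hzero
    rw [this, intDegree_neg] at hlt
    exact lt_irrefl _ hlt
  refine ⟨hne, le_antisymm (le_trans (intDegree_add_le hy0 hne) (max_le le_rfl hlt.le)) ?_⟩
  have h2 : x.intDegree ≤ max (x + y).intDegree (-y).intDegree := by
    have := intDegree_add_le (x := x + y) (y := -y) (neg_ne_zero.mpr hy0)
      (by rwa [add_neg_cancel_right])
    rwa [add_neg_cancel_right] at this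
  rw [intDegree_neg] at h2
  rcases max_cases (x + y).intDegree y.intDegree with ⟨he, _⟩ | ⟨he, _⟩ <;> omega

open RatFunc in
/-- For `θ ∈ F_{q^n}^*` and `t ∈ F_q`, the rational function
`θx^r + t x^{-r}` over `F_{q^n}` is not of the form `h(x)^p - h(x) + c`. -/
theorem stmt_2 (p s q n r : ℕ) (hp : p.Prime) (hs : 0 < s) (hq : q = p ^ s)
    (hn : 0 < n) (hr : 0 < r) (hrdvd : r ∣ q ^ n - 1)
    (Fq F : Type) [Field Fq] [Field F] [Fintype Fq] [Fintype F] [Algebra Fq F]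
    (hcardq : Fintype.card Fq = q) (hcardF : Fintype.card F = q ^ n)
    (θ : F) (hθ : θ ≠ 0) (t : Fq) :
    ∀ (h : RatFunc F) (c : F),
      RatFunc.C θ * RatFunc.X ^ r +
          RatFunc.C (algebraMap Fq F t) * (RatFunc.X)⁻¹ ^ r ≠
        h ^ p - h + RatFunc.C c := by
  intro h c heq
  set t' : F := algebraMap Fq F t with ht'
  set L : RatFunc F := RatFunc.C θ * RatFunc.X ^ r + RatFunc.C t' * (RatFunc.X)⁻¹ ^ r with hL
  have hX : (RatFunc.X : RatFunc F) ≠ 0 := RatFunc.X_ne_zero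
  -- p does not divide r
  have hpr : ¬ p ∣ r := by
    intro hd
    have h1 : p ∣ q ^ n - 1 := hd.trans hrdvd
    have h2 : p ∣ q ^ n := hq ▸ dvd_pow (dvd_pow_self p hs.ne') hn.ne'
    have hq0 : 0 < q := by rw [hq]; exact pow_pos hp.pos s
    have h3 : 1 ≤ q ^ n := Nat.one_le_pow _ _ hq0
    have : p ∣ 1 := by
      have := Nat.dvd_sub h2 h1
      rwa [Nat.sub_sub_self h3] at this
    exact hp.one_lt.ne' (Nat.dvd_one.mp this)
  -- key: L * X^r is a polynomial
  have hkey : L * RatFunc.X ^ r = RatFunc.C θ * RatFunc.X ^ (2 * r) + RatFunc.C t' := by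
    have h1 : ((RatFunc.X : RatFunc F)⁻¹) ^ r * RatFunc.X ^ r = 1 := by
      rw [← mul_pow, inv_mul_cancel₀ hX, one_pow]
    rw [hL, add_mul, mul_assoc (RatFunc.C t'), h1, mul_one, mul_assoc (RatFunc.C θ), ← pow_add, two_mul]
  have hCθ : (RatFunc.C θ : RatFunc F) ≠ 0 := (map_ne_zero _).mpr hθ
  have hdom1 : RatFunc.C θ * RatFunc.X ^ (2 * r) ≠ 0 :=
    mul_ne_zero hCθ (pow_ne_zero _ hX)
  have hdeg1 : (RatFunc.C θ * RatFunc.X ^ (2 * r)).intDegree = (2 * r : ℤ) := by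
    rw [intDegree_mul hCθ (pow_ne_zero _ hX), intDegree_C,
      aux_intDegree_pow _ hX, intDegree_X]
    push_cast; ring
  have hP : (RatFunc.C θ * RatFunc.X ^ (2 * r) + RatFunc.C t' ≠ 0) ∧
      (RatFunc.C θ * RatFunc.X ^ (2 * r) + RatFunc.C t').intDegree = (2 * r : ℤ) := by
    have := aux_intDegree_dom (y := RatFunc.C t') hdom1 ?_
    · exact ⟨this.1, by rw [this.2, hdeg1]⟩
    by_cases ht0 : t' = 0
    · left; simp [ht0]
    · right; rw [intDegree_C, hdeg1]; positivity
  have hLne : L ≠ 0 := by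
    intro h0
    rw [h0, zero_mul] at hkey
    exact hP.1 hkey.symm
  have hLdeg : L.intDegree = (r : ℤ) := by
    have := intDegree_mul hLne (pow_ne_zero r hX)
    rw [hkey, hP.2, aux_intDegree_pow _ hX, intDegree_X] at this
    omega
  -- now analyze RHS
  rw [heq] at hLdeg hLne
  by_cases hh : h = 0
  · rw [hh] at hLdeg
    simp only [zero_pow hp.pos.ne', sub_zero, zero_add, intDegree_C] at hLdeg
    omega
  have hhp : h ^ p ≠ 0 := pow_ne_zero _ hh
  have hdp : (h ^ p).intDegree = (p : ℤ) * h.intDegree := aux_intDegree_pow _ hh _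
  by_cases hd : 0 < h.intDegree
  · -- dominant term h^p
    have hlt : (h.intDegree : ℤ) < (p : ℤ) * h.intDegree := by
      have : (2 : ℤ) ≤ (p : ℤ) := by exact_mod_cast hp.two_le
      nlinarith
    have hdom : -h + RatFunc.C c = 0 ∨ (-h + RatFunc.C c).intDegree < (h ^ p).intDegree := by
      by_cases hc : RatFunc.C c = 0
      · right; rw [hc, add_zero, intDegree_neg, hdp]; exact hlt
      right
      rcases em (-h + RatFunc.C c = 0) with h0 | h0
      · rw [h0, intDegree_zero, hdp]; nlinarith
      calc (-h + RatFunc.C c).intDegree ≤ max (-h).intDegree (RatFunc.C c).intDegree :=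
            intDegree_add_le hc h0
        _ = max h.intDegree 0 := by rw [intDegree_neg, intDegree_C]
        _ = h.intDegree := max_eq_left hd.le
        _ < (h ^ p).intDegree := by rw [hdp]; exact hlt
    have := (aux_intDegree_dom hhp hdom).2
    rw [show h ^ p - h + RatFunc.C c = h ^ p + (-h + RatFunc.C c) by ring] at hLdeg
    rw [this, hdp] at hLdeg
    have : (p : ℤ) ∣ (r : ℤ) := ⟨h.intDegree, hLdeg.symm⟩
    exact hpr (by exact_mod_cast this)
  · push_neg at hd
    have h1 : (h ^ p).intDegree ≤ 0 := by rw [hdp]; exact mul_nonpos_of_nonneg_of_nonpos (by positivity) hd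
    have h2 : (h ^ p + -h).intDegree ≤ 0 :=
      aux_intDegree_nonpos h1 (by rw [intDegree_neg]; exact hd)
    have h3 : (h ^ p + -h + RatFunc.C c).intDegree ≤ 0 :=
      aux_intDegree_nonpos h2 (le_of_eq (intDegree_C c))
    rw [show h ^ p - h + RatFunc.C c = h ^ p + -h + RatFunc.C c by ring] at hLdeg
    omega
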